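/- Let D be a probability measure on a measurable instance space X, c : X → {−1,+1} a concept, U a perturbation set with x ∈ U(x) for every x, ε ∈ (0, 1/4), and ĥ : X → {−1,+1} a predictor with robust risk R_U(ĥ; D, c) = D{x : ∃ z ∈ U(x), ĥ(z) ≠ c(x)} ≤ ε. For y ∈ {−1,+1}, define g_y : X → {−1,+1} by g_y(x) = y if x ∈ ⋃_{x̃ ∈ Rob_U(ĥ), ĥ(x̃) = y} U⁻¹(U)(x̃), and g_y(x) = −y otherwise. Then D{x : g_y(x) ≠ c(x)} ≤ 2ε, and D(Rob_{U⁻¹(U)}(g_y)) ≥ (1−ε)·D({x : ĥ(x) = y} | Rob_U(ĥ)), where the conditional probability is well defined since D(Rob_U(ĥ)) ≥ 1−ε > 0. -/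

import Mathlib

open MeasureTheory

/-- `UinvU U x` is the set `U⁻¹(U)(x)` of natural examples sharing an adversarial
perturbation with `x`. -/
def UinvU {X : Type*} (U : X → Set X) (x : X) : Set X := {x' | ∃ z, z ∈ U x ∧ z ∈ U x'}

/-- Robust region of a classifier `h` w.r.t. a perturbation set `V`. -/
def Rob {X Y : Type*} (V : X → Set X) (h : X → Y) : Set X := {x | ∀ z ∈ V x, h z = h x}

/- The expanded predictor `g_y`: predicts `y` on the `U⁻¹(U)`-expansion of the part of the
robust region of `ĥ` where `ĥ` predicts `y`, and `-y` elsewhere. Binary labels are formalized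
as `ℤˣ = {−1, +1}`. -/
open Classical in
noncomputable def gExpand {X : Type*} (U : X → Set X) (hh : X → ℤˣ) (y : ℤˣ) (x : X) : ℤˣ :=
  if x ∈ ⋃ x' ∈ {x' | x' ∈ Rob U hh ∧ hh x' = y}, UinvU U x' then y else -y

lemma gExpand_eq_of_mem {X : Type*} (U : X → Set X) (hh : X → ℤˣ) (y : ℤˣ) (x : X)
    (h : x ∈ ⋃ x' ∈ {x' | x' ∈ Rob U hh ∧ hh x' = y}, UinvU U x') :
    gExpand U hh y x = y := by
  classical
  simp only [gExpand, if_pos h]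

lemma gExpand_eq_of_not_mem {X : Type*} (U : X → Set X) (hh : X → ℤˣ) (y : ℤˣ) (x : X)
    (h : x ∉ ⋃ x' ∈ {x' | x' ∈ Rob U hh ∧ hh x' = y}, UinvU U x') :
    gExpand U hh y x = -y := by
  classical
  simp only [gExpand, if_neg h]

/-- **Lemma 5**: if `ĥ` has robust risk at most `ε < 1/4` w.r.t. `U`, then for each label
`y ∈ {−1,+1}` the expanded predictor `g_y` has natural error at most `2ε` and is robust
w.r.t. `U⁻¹(U)` on a region of mass at least `(1−ε)·D(ĥ = y | Rob_U(ĥ))`. -/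
theorem expansion_lemma
    {X : Type*} [MeasurableSpace X] [Nonempty X]
    (D : Measure X) [IsProbabilityMeasure D]
    (U : X → Set X) (hU : ∀ x, x ∈ U x) (c : X → ℤˣ)
    (ε : ℝ) (hε0 : 0 < ε) (hε1 : ε < 1/4)
    (hh : X → ℤˣ) (hrisk : D {x | ∃ z ∈ U x, hh z ≠ c x} ≤ ENNReal.ofReal ε)
    (y : ℤˣ) :
    D {x | gExpand U hh y x ≠ c x} ≤ ENNReal.ofReal (2 * ε) ∧
    ENNReal.ofReal (1 - ε) * (D ({x | hh x = y} ∩ Rob U hh) / D (Rob U hh)) ≤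
      D (Rob (UinvU U) (gExpand U hh y)) := by
  classical
  set B : Set X := {x | ∃ z ∈ U x, hh z ≠ c x} with hBdef
  have hne : ∀ a b : ℤˣ, a ≠ b → a = -b := by decide
  -- points outside B are robust and correctly classified
  have hgood : ∀ x, x ∉ B → (∀ z ∈ U x, hh z = c x) := by
    intro x hx
    simp only [hBdef, Set.mem_setOf_eq] at hx
    push_neg at hx
    exact hx
  have hRobOf : ∀ x, x ∉ B → x ∈ Rob U hh := by
    intro x hx z hz
    rw [hgood x hx z hz, hgood x hx x (hU x)]
  -- Part 1: error set of gExpand is contained in B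
  have herr : {x | gExpand U hh y x ≠ c x} ⊆ B := by
    intro x hx
    by_contra hxB
    have hxRob := hRobOf x hxB
    have hxc : hh x = c x := hgood x hxB x (hU x)
    apply hx
    by_cases hcy : c x = y
    · apply (gExpand_eq_of_mem U hh y x ?_).trans hcy.symm
      refine Set.mem_biUnion ?_ ⟨x, hU x, hU x⟩
      exact ⟨hxRob, hxc.trans hcy⟩
    · rw [gExpand_eq_of_not_mem U hh y x ?_]
      · exact (hne _ _ hcy).symm
      intro hmem
      rcases Set.mem_iUnion₂.1 hmem with ⟨x', ⟨hx'Rob, hx'y⟩, z, hz1, hz2⟩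
      exact hcy (((hgood x hxB z hz2).symm.trans (hx'Rob z hz1)).trans hx'y)
  have part1 : D {x | gExpand U hh y x ≠ c x} ≤ ENNReal.ofReal (2 * ε) := by
    refine le_trans (measure_mono herr) (le_trans hrisk ?_)
    exact ENNReal.ofReal_le_ofReal (by linarith)
  -- Part 2
  have hsub : {x | hh x = y} ∩ Rob U hh ⊆ Rob (UinvU U) (gExpand U hh y) := by
    rintro x ⟨hxy, hxRob⟩ x' hx'
    have hxS : x ∈ {x' | x' ∈ Rob U hh ∧ hh x' = y} := ⟨hxRob, hxy⟩
    rw [gExpand_eq_of_mem U hh y x' (Set.mem_biUnion hxS hx'),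
        gExpand_eq_of_mem U hh y x (Set.mem_biUnion hxS ⟨x, hU x, hU x⟩)]
  have hRobcompl : (Rob U hh)ᶜ ⊆ B := fun x hx => by
    by_contra h; exact hx (hRobOf x h)
  have hRoblb : ENNReal.ofReal (1 - ε) ≤ D (Rob U hh) := by
    have h1 : (1 : ENNReal) ≤ D (Rob U hh) + ENNReal.ofReal ε := by
      calc (1 : ENNReal) = D (Rob U hh ∪ (Rob U hh)ᶜ) := by
            rw [Set.union_compl_self, measure_univ]
        _ ≤ D (Rob U hh) + D ((Rob U hh)ᶜ) := measure_union_le _ _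
        _ ≤ D (Rob U hh) + ENNReal.ofReal ε :=
            add_le_add_right (le_trans (measure_mono hRobcompl) hrisk) _
    have h2 : ENNReal.ofReal (1 - ε) + ENNReal.ofReal ε = 1 := by
      rw [← ENNReal.ofReal_add (by linarith) hε0.le]
      norm_num
    rw [← ENNReal.add_le_add_iff_right (ENNReal.ofReal_ne_top : ENNReal.ofReal ε ≠ ⊤), h2]
    exact h1
  have hRob0 : D (Rob U hh) ≠ 0 := by
    intro h
    rw [h] at hRoblb
    simp only [nonpos_iff_eq_zero, ENNReal.ofReal_eq_zero] at hRoblb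
    linarith
  have part2 : ENNReal.ofReal (1 - ε) * (D ({x | hh x = y} ∩ Rob U hh) / D (Rob U hh)) ≤
      D (Rob (UinvU U) (gExpand U hh y)) := by
    calc ENNReal.ofReal (1 - ε) * (D ({x | hh x = y} ∩ Rob U hh) / D (Rob U hh))
        ≤ D (Rob U hh) * (D ({x | hh x = y} ∩ Rob U hh) / D (Rob U hh)) :=
          mul_le_mul_left hRoblb _
      _ = D ({x | hh x = y} ∩ Rob U hh) := by
          rw [mul_comm, ENNReal.div_mul_cancel hRob0 (measure_ne_top D _)]
      _ ≤ D (Rob (UinvU U) (gExpand U hh y)) := measure_mono hsub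
  exact ⟨part1, part2⟩
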